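/- Let (X, d) be a metric space, let φ : [0,∞) → [0,∞) be a non-decreasing function, and let (f_i)_{i≥1} be a countable family of maps f_i : X → X each satisfying d(f_i(x), f_i(y)) ≤ φ(d(x,y)) for all x, y ∈ X. Define the set operator F on the space H(X) of nonempty compact subsets of X by F(A) = closure(⋃_{i=1}^∞ f_i(A)), and suppose F maps H(X) into H(X). Then h_d(F(A), F(B)) ≤ φ(h_d(A,B)) for all A, B ∈ H(X); that is, the countable-IFS operator F is φ-contractive with respect to the Hausdorff metric. -/

import Mathlib

open Filter Set Topology

/-- For a countable family of maps `f i`, each `φ`-contractive for a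
non-decreasing `φ : [0,∞) → [0,∞)`, the countable-IFS operator
`F(A) = closure (⋃ i, f i '' A)`, assumed to map nonempty compact sets to compact sets,
satisfies `h_d(F(A), F(B)) ≤ φ(h_d(A,B))` for all nonempty compact `A, B`. -/
theorem countable_IFS_operator_phi_contractive {X : Type*} [MetricSpace X]
    (φ : ℝ → ℝ)
    (hmap : ∀ t : ℝ, 0 ≤ t → 0 ≤ φ t)
    (hmono : ∀ s t : ℝ, 0 ≤ s → s ≤ t → φ s ≤ φ t)
    (f : ℕ → X → X)
    (hf : ∀ i, ∀ x y : X, dist (f i x) (f i y) ≤ φ (dist x y))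
    (F : Set X → Set X)
    (hF : ∀ A : Set X, F A = closure (⋃ i, f i '' A))
    (hFH : ∀ A : Set X, A.Nonempty → IsCompact A → IsCompact (F A)) :
    ∀ A B : Set X, A.Nonempty → B.Nonempty → IsCompact A → IsCompact B →
      Metric.hausdorffDist (F A) (F B) ≤ φ (Metric.hausdorffDist A B) := by
  intro A B hAne hBne hA hB
  have hd0 : 0 ≤ Metric.hausdorffDist A B := Metric.hausdorffDist_nonneg
  have hφ0 : 0 ≤ φ (Metric.hausdorffDist A B) := hmap _ hd0
  have hedist : EMetric.hausdorffEdist A B ≠ ⊤ :=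
    Metric.hausdorffEdist_ne_top_of_nonempty_of_bounded hAne hBne hA.isBounded hB.isBounded
  rw [hF A, hF B, Metric.hausdorffDist_closure]
  apply Metric.hausdorffDist_le_of_mem_dist hφ0
  · rintro x hx
    obtain ⟨i, a, ha, rfl⟩ := by simpa using hx
    obtain ⟨b, hb, hdab⟩ := hB.exists_infDist_eq_dist hBne a
    refine ⟨f i b, Set.mem_iUnion.2 ⟨i, Set.mem_image_of_mem _ hb⟩, ?_⟩
    calc dist (f i a) (f i b) ≤ φ (dist a b) := hf i a b
      _ ≤ φ (Metric.hausdorffDist A B) := by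
          apply hmono _ _ dist_nonneg
          rw [← hdab]
          exact Metric.infDist_le_hausdorffDist_of_mem ha hedist
  · rintro x hx
    obtain ⟨i, b, hb, rfl⟩ := by simpa using hx
    obtain ⟨a, ha, hdab⟩ := hA.exists_infDist_eq_dist hAne b
    refine ⟨f i a, Set.mem_iUnion.2 ⟨i, Set.mem_image_of_mem _ ha⟩, ?_⟩
    calc dist (f i b) (f i a) ≤ φ (dist b a) := hf i b a
      _ ≤ φ (Metric.hausdorffDist A B) := by
          apply hmono _ _ dist_nonneg
          rw [← hdab, Metric.hausdorffDist_comm]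
          exact Metric.infDist_le_hausdorffDist_of_mem hb
            (by rw [Metric.hausdorffEDist_comm]; exact hedist)
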